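/- For every δ > 0 there exists N such that the following holds for every integer n > N that is a perfect square, with m = √n: for every regular tournament T on n vertices there exists a partition V₁, …, V_m of the vertex set of T such that for every vertex v and every index i ∈ {1, …, m}, the number of out-neighbors of v in V_i and the number of in-neighbors of v in V_i each lie between (1 − δ/4)·(n−1)/(2m) and (1 + δ/4)·(n−1)/(2m). -/

import Mathlib

open Finset

noncomputable def Fm (m : ℕ) (i : Fin m) (a : ℕ) : ℝ :=
  ∑ c : Fin m, ((if c = i then (1:ℝ) else 0) - 1/m)^a

lemma Fm_eq {m : ℕ} (i : Fin m) (a : ℕ) :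
    Fm m i a = (1 - 1/(m:ℝ))^a + ((m:ℝ) - 1) * (-(1/m))^a := by
  unfold Fm
  have h : ∀ c : Fin m, ((if c = i then (1:ℝ) else 0) - 1/m)^a
      = (-(1/(m:ℝ)))^a + (if c = i then (1-1/(m:ℝ))^a - (-(1/(m:ℝ)))^a else 0) := by
    intro c; split_ifs <;> ring
  rw [Finset.sum_congr rfl (fun c _ => h c)]
  rw [Finset.sum_add_distrib, Finset.sum_ite_eq' univ i, Finset.sum_const]
  simp [Finset.card_univ]
  ring

lemma Fm_zero {m : ℕ} (i : Fin m) : Fm m i 0 = m := by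
  rw [Fm_eq]; ring

lemma Fm_one {m : ℕ} (i : Fin m) : Fm m i 1 = 0 := by
  have hm : (0:ℕ) < m := i.pos
  have hm' : (m:ℝ) ≠ 0 := by positivity
  rw [Fm_eq]; field_simp; ring

lemma Fm_abs_le_one {m : ℕ} (i : Fin m) {a : ℕ} (ha : 2 ≤ a) : |Fm m i a| ≤ 1 := by
  have hm : (0:ℕ) < m := i.pos
  have hm1 : (1:ℝ) ≤ m := by exact_mod_cast hm
  set q : ℝ := 1/(m:ℝ) with hq
  have hq0 : 0 < q := by positivity
  have hq1 : q ≤ 1 := by rw [hq]; rw [div_le_one (by linarith)]; linarith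
  rw [Fm_eq]
  have h1 : |(1 - q)^a| ≤ (1-q)^2 := by
    rw [abs_pow, abs_of_nonneg (by linarith)]
    exact pow_le_pow_of_le_one (by linarith) (by linarith) ha
  have h2 : |(-q)^a| ≤ q^2 := by
    rw [abs_pow, abs_neg, abs_of_nonneg hq0.le]
    exact pow_le_pow_of_le_one hq0.le hq1 ha
  have h3 : |((m:ℝ)-1) * (-q)^a| ≤ ((m:ℝ)-1) * q^2 := by
    rw [abs_mul]
    rw [abs_of_nonneg (show (0:ℝ) ≤ (m:ℝ)-1 by linarith)]
    exact mul_le_mul_of_nonneg_left h2 (by linarith)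
  have h4 : ((m:ℝ)-1) * q^2 ≤ q * (1 - q) := by
    have : (m:ℝ) * q = 1 := by rw [hq]; field_simp
    nlinarith [sq_nonneg q]
  calc |(1 - q)^a + ((m:ℝ)-1)*(-q)^a| ≤ |(1-q)^a| + |((m:ℝ)-1)*(-q)^a| := abs_add_le _ _
    _ ≤ (1-q)^2 + q*(1-q) := by linarith
    _ ≤ 1 := by nlinarith

noncomputable def Xf {n m : ℕ} (i : Fin m) (w : Fin n) (P : Fin n → Fin m) : ℝ :=
  (if P w = i then 1 else 0) - 1/m

def cnt {n : ℕ} (g : Fin 8 → Fin n) (w : Fin n) : ℕ :=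
  (univ.filter fun j => g j = w).card

lemma sum_pi_prod {n m : ℕ} (g : Fin n → Fin m → ℝ) :
    ∑ P : Fin n → Fin m, ∏ w, g w (P w) = ∏ w, ∑ c, g w c := by
  rw [Finset.prod_univ_sum, Fintype.piFinset_univ]

lemma prod_fiber {n m : ℕ} (i : Fin m) (g : Fin 8 → Fin n) (P : Fin n → Fin m) :
    ∏ j, Xf i (g j) P = ∏ w, (Xf i w P) ^ (cnt g w) := by
  rw [← Finset.prod_fiberwise_of_maps_to (g := g) (fun j _ => Finset.mem_univ (g j))
    (fun j => Xf i (g j) P)]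
  refine Finset.prod_congr rfl fun w _ => ?_
  have : ∏ j ∈ univ.filter (fun j => g j = w), Xf i (g j) P
      = ∏ _j ∈ univ.filter (fun j => g j = w), Xf i w P := by
    refine Finset.prod_congr rfl fun j hj => ?_
    rw [Finset.mem_filter] at hj
    rw [hj.2]
  rw [this, Finset.prod_const, cnt]

lemma sum_prod_eq {n m : ℕ} (i : Fin m) (g : Fin 8 → Fin n) :
    ∑ P : Fin n → Fin m, ∏ j, Xf i (g j) P = ∏ w, Fm m i (cnt g w) := by
  have h : ∀ P : Fin n → Fin m, ∏ j, Xf i (g j) P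
      = ∏ w, ((if P w = i then (1:ℝ) else 0) - 1/m) ^ (cnt g w) := fun P => prod_fiber i g P
  rw [Finset.sum_congr rfl (fun P _ => h P)]
  rw [sum_pi_prod (fun w c => ((if c = i then (1:ℝ) else 0) - 1/m) ^ (cnt g w))]
  rfl

lemma cnt_eq_zero {n : ℕ} {g : Fin 8 → Fin n} {w : Fin n} :
    cnt g w = 0 ↔ w ∉ univ.image g := by
  rw [cnt, Finset.card_eq_zero, Finset.filter_eq_empty_iff]
  simp [eq_comm]

lemma prod_Fm_bound {n m : ℕ} (i : Fin m) (g : Fin 8 → Fin n)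
    (hg : ∀ w, cnt g w ≠ 1) :
    |∏ w, Fm m i (cnt g w)| ≤ (m:ℝ) ^ (n - (univ.image g).card) := by
  rw [Finset.abs_prod]
  have hb : ∀ w : Fin n, |Fm m i (cnt g w)| ≤ (if w ∈ univ.image g then 1 else (m:ℝ)) := by
    intro w
    split_ifs with hw
    · have h0 : cnt g w ≠ 0 := fun h => (cnt_eq_zero.mp h) hw
      have h1 := hg w
      exact Fm_abs_le_one i (by omega)
    · have h0 : cnt g w = 0 := cnt_eq_zero.mpr hw
      rw [h0, Fm_zero, abs_of_nonneg (by positivity : (0:ℝ) ≤ (m:ℝ))]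
  calc ∏ w, |Fm m i (cnt g w)| ≤ ∏ w, (if w ∈ univ.image g then 1 else (m:ℝ)) :=
        Finset.prod_le_prod (fun w _ => abs_nonneg _) (fun w _ => hb w)
    _ = (m:ℝ) ^ (n - (univ.image g).card) := by
        rw [← Finset.prod_sdiff (Finset.subset_univ (univ.image g))]
        rw [Finset.prod_congr rfl (fun w hw => if_neg (Finset.mem_sdiff.mp hw).2),
          Finset.prod_congr rfl (fun w hw => if_pos hw), Finset.prod_const, Finset.prod_const,
          one_pow, mul_one, Finset.card_sdiff_of_subset (Finset.subset_univ _), Finset.card_univ,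
          Fintype.card_fin]

lemma cnt_pos_of_mem {n : ℕ} {g : Fin 8 → Fin n} {w : Fin n}
    (hw : w ∈ univ.image g) : 1 ≤ cnt g w := by
  rw [Finset.mem_image] at hw
  obtain ⟨j, -, hj⟩ := hw
  have : j ∈ univ.filter fun j => g j = w := by simp [hj]
  exact Finset.card_pos.mpr ⟨j, this⟩

lemma image_card_le_four {n : ℕ} {g : Fin 8 → Fin n}
    (hg : ∀ w, cnt g w ≠ 1) : (univ.image g).card ≤ 4 := by
  have h8 : (univ : Finset (Fin 8)).card = ∑ w ∈ univ.image g, cnt g w :=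
    Finset.card_eq_sum_card_fiberwise (fun j _ => Finset.mem_image_of_mem g (Finset.mem_univ j))
  have hge : ∀ w ∈ univ.image g, 2 ≤ cnt g w := fun w hw => by
    have := cnt_pos_of_mem hw; have := hg w; omega
  have : 2 * (univ.image g).card ≤ ∑ w ∈ univ.image g, cnt g w := by
    calc 2 * (univ.image g).card = ∑ _w ∈ univ.image g, 2 := by
          rw [Finset.sum_const, smul_eq_mul]; ring
      _ ≤ _ := Finset.sum_le_sum hge
  simp [Finset.card_univ] at h8
  omega

lemma sum_over_good {n m : ℕ} (S : Finset (Fin n)) (hS : S.card ≤ m*m)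
    (hn4 : 4 ≤ n) (hm : 1 ≤ m) :
    ∑ g ∈ (Fintype.piFinset fun _ : Fin 8 => S).filter (fun g => ∀ w, cnt g w ≠ 1),
      (m:ℝ) ^ (n - (univ.image g).card) ≤ 327680 * (m:ℝ)^(n+4) := by
  set Gd := (Fintype.piFinset fun _ : Fin 8 => S).filter (fun g => ∀ w, cnt g w ≠ 1) with hGd
  set t := S.powerset.filter (fun T => T.card ≤ 4) with ht
  have hmaps : ∀ g ∈ Gd, univ.image g ∈ t := by
    intro g hg
    rw [hGd, Finset.mem_filter] at hg
    rw [ht, Finset.mem_filter, Finset.mem_powerset]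
    constructor
    · intro w hw
      rw [Finset.mem_image] at hw
      obtain ⟨j, -, hj⟩ := hw
      exact hj ▸ (Fintype.mem_piFinset.mp hg.1 j)
    · exact image_card_le_four hg.2
  rw [← Finset.sum_fiberwise_of_maps_to hmaps (fun g => (m:ℝ) ^ (n - (univ.image g).card))]
  have hinner : ∀ T ∈ t, ∑ g ∈ Gd.filter (fun g => univ.image g = T),
      (m:ℝ) ^ (n - (univ.image g).card) ≤ 65536 * (m:ℝ) ^ (n - T.card) := by
    intro T hT
    have heq : ∀ g ∈ Gd.filter (fun g => univ.image g = T),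
        (m:ℝ) ^ (n - (univ.image g).card) = (m:ℝ) ^ (n - T.card) := by
      intro g hg
      rw [(Finset.mem_filter.mp hg).2]
    rw [Finset.sum_congr rfl heq, Finset.sum_const, nsmul_eq_mul]
    have hsub : Gd.filter (fun g => univ.image g = T) ⊆ Fintype.piFinset fun _ : Fin 8 => T := by
      intro g hg
      rw [Finset.mem_filter] at hg
      rw [Fintype.mem_piFinset]
      intro j
      exact hg.2 ▸ Finset.mem_image_of_mem g (Finset.mem_univ j)
    have hcard : (Gd.filter (fun g => univ.image g = T)).card ≤ T.card ^ 8 := by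
      calc _ ≤ (Fintype.piFinset fun _ : Fin 8 => T).card := Finset.card_le_card hsub
        _ = T.card ^ 8 := by rw [Fintype.card_piFinset_const]
    have hT4 : T.card ≤ 4 := (Finset.mem_filter.mp hT).2
    have : ((Gd.filter (fun g => univ.image g = T)).card : ℝ) ≤ 65536 := by
      have : T.card ^ 8 ≤ 4 ^ 8 := Nat.pow_le_pow_left hT4 8
      have := hcard.trans this
      exact_mod_cast this
    have hpow : (0:ℝ) ≤ (m:ℝ) ^ (n - T.card) := by positivity
    exact mul_le_mul_of_nonneg_right this hpow
  calc ∑ T ∈ t, ∑ g ∈ Gd.filter (fun g => univ.image g = T),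
        (m:ℝ) ^ (n - (univ.image g).card)
      ≤ ∑ T ∈ t, 65536 * (m:ℝ) ^ (n - T.card) := Finset.sum_le_sum hinner
    _ ≤ ∑ T ∈ (Finset.range 5).biUnion (fun r => Finset.powersetCard r S),
        65536 * (m:ℝ) ^ (n - T.card) := by
        apply Finset.sum_le_sum_of_subset_of_nonneg
        · intro T hT
          rw [ht, Finset.mem_filter, Finset.mem_powerset] at hT
          rw [Finset.mem_biUnion]
          exact ⟨T.card, Finset.mem_range.mpr (by omega), Finset.mem_powersetCard.mpr ⟨hT.1, rfl⟩⟩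
        · intros; positivity
    _ = ∑ r ∈ Finset.range 5, ∑ T ∈ Finset.powersetCard r S, 65536 * (m:ℝ) ^ (n - T.card) := by
        rw [Finset.sum_biUnion]
        intro a ha b hb hab
        apply Finset.disjoint_left.mpr
        intro T hTa hTb
        rw [Finset.mem_powersetCard] at hTa hTb
        exact hab (hTa.2 ▸ hTb.2 ▸ rfl)
    _ ≤ ∑ r ∈ Finset.range 5, 65536 * (m:ℝ) ^ (n + 4) := by
        apply Finset.sum_le_sum
        intro r hr
        rw [Finset.mem_range] at hr
        have hr4 : r ≤ 4 := by omega
        have hcongr : ∀ T ∈ Finset.powersetCard r S, 65536 * (m:ℝ) ^ (n - T.card)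
            = 65536 * (m:ℝ) ^ (n - r) := by
          intro T hT
          rw [(Finset.mem_powersetCard.mp hT).2]
        rw [Finset.sum_congr rfl hcongr, Finset.sum_const, nsmul_eq_mul,
          Finset.card_powersetCard]
        have key : S.card.choose r * m^(n-r) ≤ m^(n+4) := by
          calc S.card.choose r * m^(n-r) ≤ S.card ^ r * m^(n-r) :=
                Nat.mul_le_mul_right _ (Nat.choose_le_pow _ _)
            _ ≤ (m*m) ^ r * m^(n-r) :=
                Nat.mul_le_mul_right _ (Nat.pow_le_pow_left hS r)
            _ = m ^ (n + r) := by
                rw [← pow_two, ← pow_mul, ← pow_add]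
                congr 1
                omega
            _ ≤ m ^ (n + 4) := Nat.pow_le_pow_right hm (by omega)
        have key' : ((S.card.choose r : ℕ):ℝ) * (m:ℝ)^(n-r) ≤ (m:ℝ)^(n+4) := by
          exact_mod_cast key
        calc ((S.card.choose r : ℕ):ℝ) * (65536 * (m:ℝ)^(n-r))
            = 65536 * (((S.card.choose r : ℕ):ℝ) * (m:ℝ)^(n-r)) := by ring
          _ ≤ 65536 * (m:ℝ)^(n+4) := by linarith
    _ = 5 * (65536 * (m:ℝ)^(n+4)) := by rw [Finset.sum_const, Finset.card_range, nsmul_eq_mul]; push_cast; ring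
    _ ≤ 327680 * (m:ℝ)^(n+4) := by ring_nf; exact le_refl _

lemma moment_bound {n m : ℕ} (i : Fin m) (S : Finset (Fin n)) (hS : S.card ≤ m*m)
    (hn4 : 4 ≤ n) (hm : 1 ≤ m) :
    ∑ P : Fin n → Fin m, (∑ w ∈ S, Xf i w P)^8 ≤ 327680 * (m:ℝ)^(n+4) := by
  classical
  set pf := Fintype.piFinset fun _ : Fin 8 => S with hpf
  have hexp : ∀ P : Fin n → Fin m, (∑ w ∈ S, Xf i w P)^8 = ∑ g ∈ pf, ∏ j, Xf i (g j) P := by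
    intro P
    calc (∑ w ∈ S, Xf i w P)^8 = ∏ _j : Fin 8, (∑ w ∈ S, Xf i w P) := by
          rw [Finset.prod_const, Finset.card_univ, Fintype.card_fin]
      _ = ∑ g ∈ pf, ∏ j, Xf i (g j) P := Finset.prod_univ_sum _ _
  rw [Finset.sum_congr rfl (fun P _ => hexp P), Finset.sum_comm]
  rw [Finset.sum_congr rfl (fun g (_ : g ∈ pf) => sum_prod_eq i g)]
  have hb : ∀ g ∈ pf, ∏ w, Fm m i (cnt g w)
      ≤ if (∀ w, cnt g w ≠ 1) then (m:ℝ) ^ (n - (univ.image g).card) else 0 := by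
    intro g _
    split_ifs with hgood
    · exact (le_abs_self _).trans (prod_Fm_bound i g hgood)
    · push_neg at hgood
      obtain ⟨w, hw⟩ := hgood
      rw [Finset.prod_eq_zero (Finset.mem_univ w) (by rw [hw, Fm_one])]
  calc ∑ g ∈ pf, ∏ w, Fm m i (cnt g w)
      ≤ ∑ g ∈ pf, if (∀ w, cnt g w ≠ 1) then (m:ℝ) ^ (n - (univ.image g).card) else 0 :=
        Finset.sum_le_sum hb
    _ = ∑ g ∈ pf.filter (fun g => ∀ w, cnt g w ≠ 1), (m:ℝ) ^ (n - (univ.image g).card) :=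
        (Finset.sum_filter _ _).symm
    _ ≤ 327680 * (m:ℝ)^(n+4) := sum_over_good S hS hn4 hm

lemma bad_count {n m : ℕ} (i : Fin m) (S : Finset (Fin n)) (hS : S.card ≤ m*m)
    (hn4 : 4 ≤ n) (hm : 1 ≤ m) (t : ℝ) (ht : 0 < t) :
    ((univ.filter fun P : Fin n → Fin m =>
        t ≤ |((S.filter fun w => P w = i).card : ℝ) - (S.card:ℝ)/m|).card : ℝ) * t^8
      ≤ 327680 * (m:ℝ)^(n+4) := by
  classical
  set M : (Fin n → Fin m) → ℝ := fun P => ((S.filter fun w => P w = i).card : ℝ) - (S.card:ℝ)/m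
    with hM
  have hMX : ∀ P, M P = ∑ w ∈ S, Xf i w P := by
    intro P
    rw [hM]
    simp only [Xf, Finset.sum_sub_distrib, Finset.sum_boole, Finset.sum_const, nsmul_eq_mul]
    rw [mul_one_div]
  set Bad := univ.filter fun P : Fin n → Fin m => t ≤ |M P| with hBad
  have h1 : (Bad.card : ℝ) * t^8 = ∑ _P ∈ Bad, t^8 := by
    rw [Finset.sum_const, nsmul_eq_mul]
  rw [h1]
  have h2 : ∑ _P ∈ Bad, t^8 ≤ ∑ P ∈ Bad, (M P)^8 := by
    apply Finset.sum_le_sum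
    intro P hP
    rw [hBad, Finset.mem_filter] at hP
    calc t^8 ≤ |M P|^8 := pow_le_pow_left₀ ht.le hP.2 8
      _ = M P ^ 8 := by
        rw [← abs_pow, abs_of_nonneg ((even_iff_two_dvd.mpr ⟨4, rfl⟩).pow_nonneg _)]
  have h3 : ∑ P ∈ Bad, (M P)^8 ≤ ∑ P : Fin n → Fin m, (M P)^8 := by
    apply Finset.sum_le_sum_of_subset_of_nonneg (Finset.subset_univ _)
    intro P _ _
    exact (even_iff_two_dvd.mpr ⟨4, rfl⟩).pow_nonneg _
  have h4 : ∑ P : Fin n → Fin m, (M P)^8 ≤ 327680 * (m:ℝ)^(n+4) := by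
    rw [Finset.sum_congr rfl (fun P _ => by rw [hMX P])]
    exact moment_bound i S hS hn4 hm
  linarith

lemma indeg_set {n : ℕ} (o : Fin n → Fin n → Bool)
    (h1 : ∀ v : Fin n, o v v = false)
    (h2 : ∀ u v : Fin n, u ≠ v → o u v = !o v u) (v : Fin n) :
    (univ.filter fun w : Fin n => o w v = true)
      = (univ.erase v) \ (univ.filter fun w : Fin n => o v w = true) := by
  ext w
  simp only [Finset.mem_filter, Finset.mem_univ, true_and, Finset.mem_sdiff,
    Finset.mem_erase, and_true]
  by_cases hne : w = v
  · subst hne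
    simp [h1 w]
  · rw [h2 w v hne]
    simp [hne]

lemma indeg_card {n : ℕ} (o : Fin n → Fin n → Bool)
    (h1 : ∀ v : Fin n, o v v = false)
    (h2 : ∀ u v : Fin n, u ≠ v → o u v = !o v u) (v : Fin n)
    (hreg : 2 * (univ.filter fun w : Fin n => o v w = true).card = n - 1) (hn : 1 ≤ n) :
    2 * (univ.filter fun w : Fin n => o w v = true).card = n - 1 := by
  rw [indeg_set o h1 h2 v]
  have hsub : (univ.filter fun w : Fin n => o v w = true) ⊆ univ.erase v := by
    intro w hw
    rw [Finset.mem_filter] at hw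
    rw [Finset.mem_erase]
    refine ⟨?_, Finset.mem_univ w⟩
    intro h; rw [h, h1 v] at hw; simp at hw
  rw [Finset.card_sdiff_of_subset hsub, Finset.card_erase_of_mem (Finset.mem_univ v), Finset.card_univ,
    Fintype.card_fin]
  omega

lemma outside_of_not_between {x c t : ℝ} (h : ¬(c - t ≤ x ∧ x ≤ c + t)) : t ≤ |x - c| := by
  rw [le_abs]
  by_cases h1 : c - t ≤ x
  · have h2 : ¬(x ≤ c + t) := fun hx => h ⟨h1, hx⟩
    left; push_neg at h2; linarith
  · push_neg at h1; right; linarith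

lemma between_of_abs_lt {x c t : ℝ} (h : |x - c| < t) : c - t ≤ x ∧ x ≤ c + t := by
  rw [abs_lt] at h
  constructor <;> linarith

/-- A tournament on `n` vertices: `o u v = true` means there is an arc from `u` to `v`.
Between any two distinct vertices there is exactly one arc, and there are no loops. -/
def IsTournament {n : ℕ} (o : Fin n → Fin n → Bool) : Prop :=
  (∀ v : Fin n, o v v = false) ∧ ∀ u v : Fin n, u ≠ v → o u v = !o v u

/-- A regular tournament: every vertex has outdegree (and hence indegree) `(n-1)/2`. -/
def IsRegularTournament {n : ℕ} (o : Fin n → Fin n → Bool) : Prop :=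
  IsTournament o ∧ ∀ v : Fin n, 2 * (univ.filter fun w : Fin n => o v w = true).card = n - 1

/-- For every `δ > 0` there exists `N` such that for every perfect square `n > N`, say
`n = m²`, and every regular tournament on `n` vertices, there is a partition of the vertex
set into classes `V₁, …, V_m` (the fibers of `P`) such that for every vertex `v` and every
index `i`, the number of out-neighbors of `v` in `V_i` and the number of in-neighbors of `v`
in `V_i` both lie between `(1 − δ/4)·(n−1)/(2m)` and `(1 + δ/4)·(n−1)/(2m)`. -/
theorem regular_tournament_balanced_partition :
    ∀ δ : ℝ, 0 < δ → ∃ N : ℕ, ∀ n : ℕ, N < n → ∀ m : ℕ, n = m * m →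
      ∀ o : Fin n → Fin n → Bool, IsRegularTournament o →
        ∃ P : Fin n → Fin m, ∀ v : Fin n, ∀ i : Fin m,
          ((1 - δ / 4) * ((n : ℝ) - 1) / (2 * m) ≤
              ((univ.filter fun w : Fin n => P w = i ∧ o v w = true).card : ℝ) ∧
            ((univ.filter fun w : Fin n => P w = i ∧ o v w = true).card : ℝ) ≤
              (1 + δ / 4) * ((n : ℝ) - 1) / (2 * m)) ∧
          ((1 - δ / 4) * ((n : ℝ) - 1) / (2 * m) ≤
              ((univ.filter fun w : Fin n => P w = i ∧ o w v = true).card : ℝ) ∧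
            ((univ.filter fun w : Fin n => P w = i ∧ o w v = true).card : ℝ) ≤
              (1 + δ / 4) * ((n : ℝ) - 1) / (2 * m)) := by
  intro δ hδ
  classical
  set K : ℕ := ⌈(2:ℝ)^53 / δ^8⌉₊ + 4 with hK
  refine ⟨K * K, ?_⟩
  intro n hn m hnm o hreg
  obtain ⟨⟨h1, h2⟩, hdeg⟩ := hreg
  -- basic size facts
  have hmK : K < m := by
    by_contra hc
    push_neg at hc
    have : m * m ≤ K * K := Nat.mul_le_mul hc hc
    omega
  have hm5 : 5 ≤ m := by omega
  have hm1 : 1 ≤ m := by omega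
  have hn25 : 25 ≤ n := by nlinarith
  have hn4 : 4 ≤ n := by omega
  have hn1 : 1 ≤ n := by omega
  have hmR : (1:ℝ) ≤ m := by exact_mod_cast hm1
  have hm0 : (0:ℝ) < m := by linarith
  have hnR : (n:ℝ) = (m:ℝ) * m := by rw [hnm]; push_cast; ring
  have hδm : (2:ℝ)^53 < δ^8 * m := by
    have hceil : (2:ℝ)^53 / δ^8 ≤ (⌈(2:ℝ)^53 / δ^8⌉₊ : ℝ) := Nat.le_ceil _
    have hKm : ((K:ℕ):ℝ) + 1 ≤ (m:ℝ) := by exact_mod_cast hmK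
    have hKR : ((K:ℕ):ℝ) = (⌈(2:ℝ)^53 / δ^8⌉₊ : ℝ) + 4 := by rw [hK]; push_cast; ring
    have hd8 : 0 < δ^8 := by positivity
    have hm' : (2:ℝ)^53 / δ^8 < (m:ℝ) := by linarith
    calc (2:ℝ)^53 = δ^8 * ((2:ℝ)^53 / δ^8) := by field_simp
      _ < δ^8 * m := by exact mul_lt_mul_of_pos_left hm' hd8
  -- mean and threshold
  set μ : ℝ := ((n:ℝ) - 1) / (2*m) with hμ
  set t : ℝ := δ/4 * μ with htdef
  have hμ4 : (m:ℝ)/4 ≤ μ := by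
    rw [hμ, hnR]
    rw [div_le_div_iff₀ (by norm_num) (by positivity)]
    have hm5R : (5:ℝ) ≤ m := by exact_mod_cast hm5
    nlinarith
  have hμpos : 0 < μ := by linarith
  have htpos : 0 < t := by rw [htdef]; positivity
  -- neighborhoods
  set Sout : Fin n → Finset (Fin n) := fun v => univ.filter fun w => o v w = true with hSout
  set Sin : Fin n → Finset (Fin n) := fun v => univ.filter fun w => o w v = true with hSin
  have hScard : ∀ v, ((Sout v).card : ℝ)/m = μ ∧ ((Sin v).card : ℝ)/m = μ := by
    intro v
    have ho := hdeg v
    have hi := indeg_card o h1 h2 v ho hn1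
    have ho' : ((Sout v).card : ℝ) = ((n:ℝ) - 1)/2 := by
      have : (2 * (Sout v).card : ℕ) = n - 1 := ho
      have hc : ((2 * (Sout v).card : ℕ) : ℝ) = ((n - 1 : ℕ) : ℝ) := by rw [this]
      push_cast [Nat.cast_sub hn1] at hc
      linarith
    have hi' : ((Sin v).card : ℝ) = ((n:ℝ) - 1)/2 := by
      have hc : ((2 * (Sin v).card : ℕ) : ℝ) = ((n - 1 : ℕ) : ℝ) := by rw [hi]
      push_cast [Nat.cast_sub hn1] at hc
      linarith
    constructor
    · rw [ho', hμ]; field_simp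
    · rw [hi', hμ]; field_simp
  have hScard_le : ∀ S : Finset (Fin n), S.card ≤ m * m := fun S => by
    calc S.card ≤ (univ : Finset (Fin n)).card := Finset.card_le_card (Finset.subset_univ S)
      _ = n := by rw [Finset.card_univ, Fintype.card_fin]
      _ = m * m := hnm
  -- bad sets
  set badO : Fin n → Fin m → Finset (Fin n → Fin m) := fun v i =>
    univ.filter fun P => t ≤ |(((Sout v).filter fun w => P w = i).card : ℝ) - ((Sout v).card : ℝ)/m|
    with hbadO
  set badI : Fin n → Fin m → Finset (Fin n → Fin m) := fun v i =>
    univ.filter fun P => t ≤ |(((Sin v).filter fun w => P w = i).card : ℝ) - ((Sin v).card : ℝ)/m|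
    with hbadI
  have hbadOcard : ∀ v i, ((badO v i).card : ℝ) * t^8 ≤ 327680 * (m:ℝ)^(n+4) := fun v i =>
    bad_count i (Sout v) (hScard_le _) hn4 hm1 t htpos
  have hbadIcard : ∀ v i, ((badI v i).card : ℝ) * t^8 ≤ 327680 * (m:ℝ)^(n+4) := fun v i =>
    bad_count i (Sin v) (hScard_le _) hn4 hm1 t htpos
  -- the goal condition
  set Cond : (Fin n → Fin m) → Fin n → Fin m → Prop := fun P v i =>
          ((1 - δ / 4) * ((n : ℝ) - 1) / (2 * m) ≤
              ((univ.filter fun w : Fin n => P w = i ∧ o v w = true).card : ℝ) ∧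
            ((univ.filter fun w : Fin n => P w = i ∧ o v w = true).card : ℝ) ≤
              (1 + δ / 4) * ((n : ℝ) - 1) / (2 * m)) ∧
          ((1 - δ / 4) * ((n : ℝ) - 1) / (2 * m) ≤
              ((univ.filter fun w : Fin n => P w = i ∧ o w v = true).card : ℝ) ∧
            ((univ.filter fun w : Fin n => P w = i ∧ o w v = true).card : ℝ) ≤
              (1 + δ / 4) * ((n : ℝ) - 1) / (2 * m)) with hCond
  set AllBad := univ.filter fun P : Fin n → Fin m => ¬ ∀ v i, Cond P v i with hAllBad
  -- count identities
  have hcntO : ∀ (P : Fin n → Fin m) v i,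
      (univ.filter fun w : Fin n => P w = i ∧ o v w = true) = (Sout v).filter fun w => P w = i := by
    intro P v i
    rw [hSout]
    ext w
    simp only [Finset.mem_filter, Finset.mem_univ, true_and]
    tauto
  have hcntI : ∀ (P : Fin n → Fin m) v i,
      (univ.filter fun w : Fin n => P w = i ∧ o w v = true) = (Sin v).filter fun w => P w = i := by
    intro P v i
    rw [hSin]
    ext w
    simp only [Finset.mem_filter, Finset.mem_univ, true_and]
    tauto
  have hlo : (1 - δ / 4) * ((n : ℝ) - 1) / (2 * m) = μ - t := by
    rw [htdef, hμ]; ring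
  have hhi : (1 + δ / 4) * ((n : ℝ) - 1) / (2 * m) = μ + t := by
    rw [htdef, hμ]; ring
  -- subset into union of bad events
  have hsub : AllBad ⊆ (univ : Finset (Fin n × Fin m)).biUnion
      (fun p => badO p.1 p.2 ∪ badI p.1 p.2) := by
    intro P hP
    rw [hAllBad, Finset.mem_filter] at hP
    push_neg at hP
    obtain ⟨v, i, hvi⟩ := hP.2
    rw [Finset.mem_biUnion]
    refine ⟨(v, i), Finset.mem_univ _, ?_⟩
    rw [Finset.mem_union]
    set xO : ℝ := (((Sout v).filter fun w => P w = i).card : ℝ) with hxO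
    set xI : ℝ := (((Sin v).filter fun w => P w = i).card : ℝ) with hxI
    by_cases hO : t ≤ |xO - μ|
    · left
      rw [hbadO, Finset.mem_filter]
      exact ⟨Finset.mem_univ _, by rw [(hScard v).1]; exact hO⟩
    · right
      rw [hbadI, Finset.mem_filter]
      refine ⟨Finset.mem_univ _, ?_⟩
      rw [(hScard v).2]
      push_neg at hO
      have hOok := between_of_abs_lt hO
      apply outside_of_not_between
      intro hIok
      apply hvi
      rw [hCond]
      refine ⟨?_, ?_⟩
      · rw [hcntO P v i, hlo, hhi, ← hxO]
        exact hOok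
      · rw [hcntI P v i, hlo, hhi, ← hxI]
        exact hIok
  -- cardinality bound
  have hcard1 : AllBad.card ≤ ∑ p : Fin n × Fin m, ((badO p.1 p.2).card + (badI p.1 p.2).card) := by
    calc AllBad.card ≤ ((univ : Finset (Fin n × Fin m)).biUnion
          (fun p => badO p.1 p.2 ∪ badI p.1 p.2)).card := Finset.card_le_card hsub
      _ ≤ ∑ p : Fin n × Fin m, (badO p.1 p.2 ∪ badI p.1 p.2).card := Finset.card_biUnion_le
      _ ≤ ∑ p : Fin n × Fin m, ((badO p.1 p.2).card + (badI p.1 p.2).card) :=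
          Finset.sum_le_sum fun p _ => Finset.card_union_le _ _
  have hcard2 : (AllBad.card : ℝ) * t^8 ≤ (n:ℝ) * m * (2 * (327680 * (m:ℝ)^(n+4))) := by
    have hc : (AllBad.card : ℝ) ≤ ∑ p : Fin n × Fin m,
        (((badO p.1 p.2).card : ℝ) + ((badI p.1 p.2).card : ℝ)) := by
      have := hcard1
      have hcast : ((∑ p : Fin n × Fin m, ((badO p.1 p.2).card + (badI p.1 p.2).card) : ℕ) : ℝ)
          = ∑ p : Fin n × Fin m, (((badO p.1 p.2).card : ℝ) + ((badI p.1 p.2).card : ℝ)) := by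
        push_cast; rfl
      rw [← hcast]
      exact_mod_cast this
    calc (AllBad.card : ℝ) * t^8
        ≤ (∑ p : Fin n × Fin m, (((badO p.1 p.2).card : ℝ) + ((badI p.1 p.2).card : ℝ))) * t^8 :=
          mul_le_mul_of_nonneg_right hc (by positivity)
      _ = ∑ p : Fin n × Fin m, (((badO p.1 p.2).card : ℝ) * t^8 + ((badI p.1 p.2).card : ℝ) * t^8)
          := by rw [Finset.sum_mul]; refine Finset.sum_congr rfl fun p _ => by ring
      _ ≤ ∑ _p : Fin n × Fin m, (2 * (327680 * (m:ℝ)^(n+4))) := by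
          refine Finset.sum_le_sum fun p _ => ?_
          have := hbadOcard p.1 p.2
          have := hbadIcard p.1 p.2
          linarith
      _ = (n:ℝ) * m * (2 * (327680 * (m:ℝ)^(n+4))) := by
          rw [Finset.sum_const, Finset.card_univ, nsmul_eq_mul]
          simp [Fintype.card_prod]
  -- numeric comparison
  have hnum : (n:ℝ) * m * (2 * (327680 * (m:ℝ)^(n+4))) < (m:ℝ)^n * t^8 := by
    have hlhs : (n:ℝ) * m * (2 * (327680 * (m:ℝ)^(n+4))) = 655360 * (m:ℝ)^(n+7) := by
      rw [hnR, show n + 7 = (n+4) + 3 from rfl, pow_add]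
      ring
    have ht16 : δ * m / 16 ≤ t := by
      rw [htdef]
      calc δ * m / 16 = δ/4 * ((m:ℝ)/4) := by ring
        _ ≤ δ/4 * μ := by
            apply mul_le_mul_of_nonneg_left hμ4 (by positivity)
    have ht8 : (δ * m / 16)^8 ≤ t^8 := by
      apply pow_le_pow_left₀ (by positivity) ht16
    have hkey : (655360 : ℝ) * 16^8 < δ^8 * m := by
      calc (655360 : ℝ) * 16^8 = 2814749767106560 := by norm_num
        _ < (2:ℝ)^53 := by norm_num
        _ < δ^8 * m := hδm
    have hp7 : (0:ℝ) < (m:ℝ)^(n+7) := by positivity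
    calc (n:ℝ) * m * (2 * (327680 * (m:ℝ)^(n+4))) = 655360 * (m:ℝ)^(n+7) := hlhs
      _ < (δ^8 * m / 16^8) * (m:ℝ)^(n+7) := by
          apply mul_lt_mul_of_pos_right _ hp7
          rw [lt_div_iff₀ (by norm_num : (0:ℝ) < 16^8)]
          linarith
      _ = (m:ℝ)^n * (δ * m / 16)^8 := by
          rw [div_pow, mul_pow, show n + 7 = n + 7 from rfl]
          rw [show (m:ℝ)^(n+7) = (m:ℝ)^n * (m:ℝ)^7 from pow_add (m:ℝ) n 7]
          field_simp
      _ ≤ (m:ℝ)^n * t^8 := mul_le_mul_of_nonneg_left ht8 (by positivity)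
  have hlt : (AllBad.card : ℝ) < (m:ℝ)^n := by
    have h8 : (0:ℝ) < t^8 := by positivity
    have := lt_of_le_of_lt hcard2 hnum
    exact lt_of_mul_lt_mul_right this (by positivity)
  -- extract a good P
  have hex : ∃ P : Fin n → Fin m, P ∉ AllBad := by
    by_contra hc
    push_neg at hc
    have huniv : AllBad = univ := Finset.eq_univ_iff_forall.mpr hc
    have : ((univ : Finset (Fin n → Fin m)).card : ℝ) < (m:ℝ)^n := huniv ▸ hlt
    rw [Finset.card_univ, Fintype.card_fun, Fintype.card_fin, Fintype.card_fin] at this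
    push_cast at this
    exact lt_irrefl _ this
  obtain ⟨P, hP⟩ := hex
  refine ⟨P, ?_⟩
  have : ∀ v i, Cond P v i := by
    by_contra hc
    exact hP (by rw [hAllBad, Finset.mem_filter]; exact ⟨Finset.mem_univ _, hc⟩)
  exact fun v i => this v i
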